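/- If W is a real-valued random variable with a continuous distribution (i.e., absolutely continuous, or just atomless with density), then the fractional part {nW} converges in distribution to the uniform distribution on (0,1) as n → ∞. -/

import Mathlib

open MeasureTheory Filter

namespace FractAux

/-- The set of reals whose scaled fractional part is at most `x`. -/
def A (x : ℝ) (n : ℕ) : Set ℝ := {t : ℝ | Int.fract ((n : ℝ) * t) ≤ x}

lemma measA (x : ℝ) (n : ℕ) : MeasurableSet (A x n) :=
  measurableSet_le (measurable_fract.comp (measurable_id.const_mul _)) measurable_const

/-- indicator of `A x n` -/
noncomputable def h (x : ℝ) (n : ℕ) : ℝ → ℝ := (A x n).indicator (fun _ => (1:ℝ))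

lemma h_meas (x : ℝ) (n : ℕ) : Measurable (h x n) :=
  measurable_const.indicator (measA x n)

lemma h_bound (x : ℝ) (n : ℕ) (t : ℝ) : ‖h x n t‖ ≤ 1 := by
  unfold h
  by_cases ht : t ∈ A x n
  · rw [Set.indicator_of_mem ht]; simp
  · rw [Set.indicator_of_notMem ht]; simp

lemma h_sub_bound {x : ℝ} (hx0 : 0 ≤ x) (hx1 : x < 1) (n : ℕ) (t : ℝ) :
    ‖h x n t - x‖ ≤ 1 := by
  unfold h
  by_cases ht : t ∈ A x n
  · rw [Set.indicator_of_mem ht]; rw [Real.norm_eq_abs, abs_le]; constructor <;> linarith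
  · rw [Set.indicator_of_notMem ht]; rw [Real.norm_eq_abs, abs_le]; constructor <;> linarith

lemma period_integral {x : ℝ} (hx0 : 0 ≤ x) (hx1 : x < 1) {n : ℕ} (hn : 1 ≤ n) (m : ℤ) :
    ∫ t in Set.Ioc ((m:ℝ)/n) ((m:ℝ)/n + 1/n), h x n t = x / n := by
  have hnpos : (0:ℝ) < n := by exact_mod_cast hn
  set c : ℝ := (m:ℝ)/n with hc
  have hae : h x n =ᵐ[volume.restrict (Set.Ioc c (c + 1/n))]
      (Set.Ioc c (c + x/n)).indicator (fun _ => (1:ℝ)) := by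
    have h1 : ∀ᵐ t ∂(volume.restrict (Set.Ioc c (c + 1/n))), t ≠ c + 1/n := by
      rw [ae_iff]
      have hset : {t : ℝ | ¬ t ≠ c + 1/n} = {c + 1/n} := by ext t; simp
      rw [hset]
      exact le_antisymm (le_trans (Measure.restrict_le_self _)
        (by simp)) (zero_le)
    filter_upwards [h1, ae_restrict_mem measurableSet_Ioc] with t ht hmem
    have htlt : t < c + 1/n := lt_of_le_of_ne hmem.2 ht
    have hfl : ⌊(n:ℝ) * t⌋ = m := by
      rw [Int.floor_eq_iff]
      constructor
      · have := hmem.1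
        rw [hc, div_lt_iff₀ hnpos] at this
        nlinarith [this]
      · have : t < ((m:ℝ) + 1)/n := by
          rw [hc] at htlt
          rw [← add_div] at htlt
          exact htlt
        rw [lt_div_iff₀ hnpos] at this
        nlinarith [this]
    have hfr : Int.fract ((n:ℝ) * t) = (n:ℝ) * t - m := by
      rw [Int.fract, hfl]
    have hmemiff : t ∈ A x n ↔ t ∈ Set.Ioc c (c + x/n) := by
      simp only [A, Set.mem_setOf_eq, hfr, Set.mem_Ioc]
      constructor
      · intro hle
        refine ⟨hmem.1, ?_⟩
        rw [hc, ← add_div, le_div_iff₀ hnpos]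
        nlinarith
      · intro ⟨_, hle⟩
        rw [hc, ← add_div, le_div_iff₀ hnpos] at hle
        nlinarith
    unfold h
    by_cases hA : t ∈ A x n
    · rw [Set.indicator_of_mem hA, Set.indicator_of_mem (hmemiff.1 hA)]
    · rw [Set.indicator_of_notMem hA,
        Set.indicator_of_notMem (fun hh => hA (hmemiff.2 hh))]
  rw [integral_congr_ae hae, setIntegral_indicator measurableSet_Ioc]
  have hxle : c + x/n ≤ c + 1/n := by
    have : x/n ≤ 1/n := by gcongr
    linarith
  have hinter : Set.Ioc c (c + 1/n) ∩ Set.Ioc c (c + x/n) = Set.Ioc c (c + x/n) :=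
    Set.inter_eq_self_of_subset_right (Set.Ioc_subset_Ioc_right hxle)
  rw [hinter, setIntegral_const, smul_eq_mul, mul_one, measureReal_def, Real.volume_Ioc,
    show c + x/n - c = x/n by ring,
    ENNReal.toReal_ofReal (div_nonneg hx0 hnpos.le)]


lemma intInt_h {x : ℝ} (n : ℕ) (p q : ℝ) : IntervalIntegrable (h x n) volume p q := by
  apply IntervalIntegrable.mono_fun' (g := fun _ => (1:ℝ))
  · exact intervalIntegrable_const
  · exact (h_meas x n).aestronglyMeasurable
  · exact Filter.Eventually.of_forall (h_bound x n)

lemma intInt_mul {g : ℝ → ℝ} (hg : Continuous g) {x : ℝ} (n : ℕ) (p q : ℝ) :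
    IntervalIntegrable (fun t => g t * h x n t) volume p q := by
  apply IntervalIntegrable.mono_fun' (g := fun t => ‖g t‖ * 1)
  · exact ((hg.norm.intervalIntegrable p q).mul_const 1)
  · exact (hg.measurable.mul (h_meas x n)).aestronglyMeasurable
  · refine Filter.Eventually.of_forall (fun t => ?_)
    show ‖g t * h x n t‖ ≤ ‖g t‖ * 1
    rw [norm_mul]
    exact mul_le_mul_of_nonneg_left (h_bound x n t) (norm_nonneg _)

lemma step {x : ℝ} (hx0 : 0 ≤ x) (hx1 : x < 1) {n : ℕ} (hn : 1 ≤ n) (m : ℤ)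
    {g : ℝ → ℝ} (hg : Continuous g) {ε : ℝ}
    (hgb : ∀ t ∈ Set.Icc ((m:ℝ)/n) ((m:ℝ)/n + 1/n), |g t - g ((m:ℝ)/n)| ≤ ε) :
    |(∫ t in ((m:ℝ)/n)..((m:ℝ)/n + 1/n), g t * h x n t)
      - x * ∫ t in ((m:ℝ)/n)..((m:ℝ)/n + 1/n), g t| ≤ ε / n := by
  have hnpos : (0:ℝ) < n := by exact_mod_cast hn
  set c : ℝ := (m:ℝ)/n with hc
  have hle : c ≤ c + 1/n := by
    have : (0:ℝ) < 1/n := by positivity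
    linarith
  have hper : ∫ t in c..(c + 1/n), h x n t = x / n := by
    rw [intervalIntegral.integral_of_le hle]
    exact period_integral hx0 hx1 hn m
  have hIg : IntervalIntegrable g volume c (c + 1/n) := hg.intervalIntegrable _ _
  have hIh := intInt_h (x := x) n c (c + 1/n)
  have hIgh := intInt_mul hg (x := x) n c (c + 1/n)
  have expand : ∫ t in c..(c + 1/n), (g t - g c) * (h x n t - x)
      = (∫ t in c..(c + 1/n), g t * h x n t) - x * ∫ t in c..(c + 1/n), g t := by
    have hrw : ∀ t, (g t - g c) * (h x n t - x)
        = g t * h x n t - x * g t - g c * h x n t + g c * x := by intro t; ring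
    simp_rw [hrw]
    rw [intervalIntegral.integral_add (((hIgh.sub (hIg.const_mul x)).sub
        (hIh.const_mul (g c)))) intervalIntegrable_const,
      intervalIntegral.integral_sub (hIgh.sub (hIg.const_mul x)) (hIh.const_mul (g c)),
      intervalIntegral.integral_sub hIgh (hIg.const_mul x),
      intervalIntegral.integral_const_mul, intervalIntegral.integral_const_mul,
      intervalIntegral.integral_const, hper]
    rw [smul_eq_mul, show c + 1/n - c = 1/n by ring]
    field_simp
    ring
  rw [← expand]
  have hb : ∀ t ∈ Set.uIoc c (c + 1/n), ‖(g t - g c) * (h x n t - x)‖ ≤ ε := by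
    intro t ht
    rw [Set.uIoc_of_le hle] at ht
    have ht' : t ∈ Set.Icc c (c + 1/n) := ⟨ht.1.le, ht.2⟩
    rw [norm_mul]
    have hε0 : 0 ≤ ε := le_trans (abs_nonneg _) (hgb c ⟨le_refl c, hle⟩)
    calc ‖g t - g c‖ * ‖h x n t - x‖ ≤ ε * 1 :=
          mul_le_mul (by simpa using hgb t ht') (h_sub_bound hx0 hx1 n t)
            (norm_nonneg _) hε0
      _ = ε := mul_one ε
  have := intervalIntegral.norm_integral_le_of_norm_le_const hb
  rw [show c + 1/n - c = 1/n by ring, abs_of_pos (by positivity : (0:ℝ) < 1/n)] at this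
  calc |∫ t in c..(c + 1/n), (g t - g c) * (h x n t - x)| ≤ ε * (1/n) := this
    _ = ε / n := by ring

lemma cc_tendsto {x : ℝ} (hx0 : 0 ≤ x) (hx1 : x < 1) {g : ℝ → ℝ} (hg : Continuous g)
    (hsupp : HasCompactSupport g) :
    Tendsto (fun n : ℕ => ∫ t, g t * h x n t) atTop (nhds (x * ∫ t, g t)) := by
  -- get a bound on the support
  obtain ⟨K, hK1, hKsupp⟩ : ∃ K : ℕ, 1 ≤ K ∧ ∀ t : ℝ, t ∉ Set.Ioc (-(K:ℝ)) K → g t = 0 := by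
    obtain ⟨R, hR⟩ := hsupp.isCompact.isBounded.subset_closedBall 0
    refine ⟨⌈R⌉₊ + 1, Nat.le_add_left 1 _, fun t ht => ?_⟩
    by_contra h0
    have hts : t ∈ tsupport g := subset_tsupport g (by simpa [Function.mem_support] using h0)
    have : |t| ≤ R := by
      have := hR hts
      simpa [Real.dist_eq] using this
    have hRK : R < ((⌈R⌉₊ + 1 : ℕ) : ℝ) := by
      push_cast
      exact lt_of_le_of_lt (Nat.le_ceil R) (by linarith)
    rw [abs_le] at this
    exact ht ⟨by push_cast at hRK ⊢; linarith, by push_cast at hRK ⊢; linarith⟩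
  rw [Metric.tendsto_atTop]
  intro ε hε
  have hKpos : (0:ℝ) < 2 * K + 1 := by positivity
  set ε' : ℝ := ε / (2 * K + 1) with hε'def
  have hε'pos : 0 < ε' := by positivity
  obtain ⟨δ, hδpos, hδ⟩ := Metric.uniformContinuous_iff.1
    (hsupp.uniformContinuous_of_continuous hg) ε' hε'pos
  refine ⟨⌈1/δ⌉₊ + 1, fun n hn => ?_⟩
  have hn1 : 1 ≤ n := le_trans (Nat.le_add_left 1 _) hn
  have hnpos : (0:ℝ) < n := by exact_mod_cast hn1
  have hinv : 1/(n:ℝ) < δ := by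
    have h1 : (1:ℝ)/δ < n := by
      calc (1:ℝ)/δ ≤ ⌈1/δ⌉₊ := Nat.le_ceil _
        _ < n := by exact_mod_cast Nat.lt_of_lt_of_le (Nat.lt_succ_self _) hn
    rw [div_lt_iff₀ hnpos]
    rw [div_lt_iff₀ hδpos] at h1
    linarith
  obtain ⟨a, hadef⟩ : ∃ a : ℕ → ℝ, a = fun i : ℕ => -(K:ℝ) + (i:ℝ)/n := ⟨_, rfl⟩
  have ha0 : a 0 = -(K:ℝ) := by rw [hadef]; simp
  have haN : a (2*K*n) = (K:ℝ) := by
    rw [hadef]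
    show -(K:ℝ) + ((2*K*n : ℕ) : ℝ)/n = (K:ℝ)
    push_cast
    field_simp
    ring
  have hastep : ∀ j : ℕ, a (j+1) = a j + 1/n := by
    intro j
    rw [hadef]
    show -(K:ℝ) + ((j+1 : ℕ) : ℝ)/n = -(K:ℝ) + (j:ℝ)/n + 1/n
    push_cast
    field_simp
    ring
  have ham : ∀ j : ℕ, a j = ((j - K*n : ℤ) : ℝ)/n := by
    intro j
    rw [hadef]
    show -(K:ℝ) + (j:ℝ)/n = ((j - K*n : ℤ) : ℝ)/n
    push_cast
    field_simp
    ring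
  -- decomposition of the two integrals
  have hints : ∀ j, IntervalIntegrable (fun t => g t * h x n t) volume (a j) (a (j+1)) :=
    fun j => intInt_mul hg n _ _
  have hintsg : ∀ j, IntervalIntegrable g volume (a j) (a (j+1)) :=
    fun j => hg.intervalIntegrable _ _
  have hsum1 : ∑ j ∈ Finset.range (2*K*n), ∫ t in (a j)..(a (j+1)), g t * h x n t
      = ∫ t, g t * h x n t := by
    rw [intervalIntegral.sum_integral_adjacent_intervals (fun j _ => hints j), ha0, haN,
      intervalIntegral.integral_of_le (by push_cast; linarith : -(K:ℝ) ≤ K)]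
    exact setIntegral_eq_integral_of_forall_compl_eq_zero
      (fun t ht => by rw [hKsupp t ht, zero_mul])
  have hsum2 : ∑ j ∈ Finset.range (2*K*n), x * ∫ t in (a j)..(a (j+1)), g t
      = x * ∫ t, g t := by
    rw [← Finset.mul_sum,
      intervalIntegral.sum_integral_adjacent_intervals (fun j _ => hintsg j), ha0, haN,
      intervalIntegral.integral_of_le (by push_cast; linarith : -(K:ℝ) ≤ K)]
    congr 1
    exact setIntegral_eq_integral_of_forall_compl_eq_zero (fun t ht => hKsupp t ht)
  have hterm : ∀ j ∈ Finset.range (2*K*n),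
      |(∫ t in (a j)..(a (j+1)), g t * h x n t) - x * ∫ t in (a j)..(a (j+1)), g t|
        ≤ ε'/n := by
    intro j _
    have := step hx0 hx1 hn1 ((j : ℤ) - K*n) hg (ε := ε') ?_
    · rw [← ham j] at this
      rw [← hastep j] at this
      exact this
    · intro t ht
      rw [← ham j] at ht
      apply le_of_lt
      have hdist : dist t (a j) < δ := by
        rw [Real.dist_eq, abs_of_nonneg (by linarith [ht.1] : (0:ℝ) ≤ t - a j)]
        have h2 := ht.2
        have h3 : t - a j ≤ 1 / (n:ℝ) := by linarith
        linarith
      have := hδ hdist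
      rw [Real.dist_eq] at this
      rw [← ham j]
      exact this
  have hfinal : dist (∫ t, g t * h x n t) (x * ∫ t, g t) ≤ 2*K*ε' := by
    rw [Real.dist_eq, ← hsum1, ← hsum2, ← Finset.sum_sub_distrib]
    calc |∑ j ∈ Finset.range (2*K*n),
          ((∫ t in (a j)..(a (j+1)), g t * h x n t) - x * ∫ t in (a j)..(a (j+1)), g t)|
        ≤ ∑ j ∈ Finset.range (2*K*n), |(∫ t in (a j)..(a (j+1)), g t * h x n t)
            - x * ∫ t in (a j)..(a (j+1)), g t| := Finset.abs_sum_le_sum_abs _ _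
      _ ≤ ∑ _j ∈ Finset.range (2*K*n), ε'/n := Finset.sum_le_sum hterm
      _ = (2*K*n : ℕ) * (ε'/n) := by rw [Finset.sum_const, Finset.card_range, nsmul_eq_mul]
      _ = 2*K*ε' := by push_cast; field_simp
  calc dist (∫ t, g t * h x n t) (x * ∫ t, g t) ≤ 2*K*ε' := hfinal
    _ < ε := by
        rw [hε'def]
        have hK0 : (0:ℝ) < K := by exact_mod_cast hK1
        calc 2*(K:ℝ)*(ε/(2*K+1)) = ε * (2*K/(2*K+1)) := by ring
          _ < ε * 1 := by
              apply mul_lt_mul_of_pos_left _ hε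
              rw [div_lt_one (by positivity)]
              linarith
          _ = ε := mul_one ε

lemma integrable_mul_ind {x : ℝ} (n : ℕ) {F : ℝ → ℝ} (hF : Integrable F) :
    Integrable (fun t => F t * h x n t) := by
  have := hF.bdd_mul (h_meas x n).aestronglyMeasurable (Filter.Eventually.of_forall (h_bound x n))
  refine this.congr (Filter.Eventually.of_forall fun t => mul_comm _ _)

lemma L1_tendsto {x : ℝ} (hx0 : 0 ≤ x) (hx1 : x < 1) {F : ℝ → ℝ} (hF : Integrable F) :
    Tendsto (fun n : ℕ => ∫ t, F t * h x n t) atTop (nhds (x * ∫ t, F t)) := by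
  rw [Metric.tendsto_atTop]
  intro ε hε
  obtain ⟨g, hgsupp, hgL1, hgcont, hgint⟩ :=
    hF.exists_hasCompactSupport_integral_sub_le (show (0:ℝ) < ε/4 by linarith)
  obtain ⟨N, hN⟩ := Metric.tendsto_atTop.1 (cc_tendsto hx0 hx1 hgcont hgsupp) (ε/4)
    (by linarith)
  refine ⟨N, fun n hn => ?_⟩
  have hFg : Integrable (fun t => F t - g t) := hF.sub hgint
  have hd1 : dist (∫ t, F t * h x n t) (∫ t, g t * h x n t) ≤ ε/4 := by
    rw [Real.dist_eq, ← integral_sub (integrable_mul_ind n hF) (integrable_mul_ind n hgint)]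
    have heq : ∀ t, F t * h x n t - g t * h x n t = (F t - g t) * h x n t := by
      intro t; ring
    simp_rw [heq]
    calc |∫ t, (F t - g t) * h x n t| = ‖∫ t, (F t - g t) * h x n t‖ :=
          (Real.norm_eq_abs _).symm
      _ ≤ ∫ t, ‖(F t - g t) * h x n t‖ := norm_integral_le_integral_norm _
      _ ≤ ∫ t, ‖F t - g t‖ := by
          apply integral_mono (integrable_mul_ind n hFg).norm hFg.norm
          intro t
          show ‖(F t - g t) * h x n t‖ ≤ ‖F t - g t‖
          rw [norm_mul]
          exact mul_le_mul_of_nonneg_left (h_bound x n t) (norm_nonneg _) |>.trans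
            (by rw [mul_one])
      _ ≤ ε/4 := hgL1
  have hd3 : dist (x * ∫ t, g t) (x * ∫ t, F t) ≤ ε/4 := by
    rw [Real.dist_eq, ← mul_sub, abs_mul, abs_of_nonneg hx0]
    calc x * |(∫ t, g t) - ∫ t, F t| ≤ 1 * |(∫ t, g t) - ∫ t, F t| := by
          apply mul_le_mul_of_nonneg_right hx1.le (abs_nonneg _)
      _ = |∫ t, (g t - F t)| := by rw [one_mul, integral_sub hgint hF]
      _ = ‖∫ t, (g t - F t)‖ := (Real.norm_eq_abs _).symm
      _ ≤ ∫ t, ‖g t - F t‖ := norm_integral_le_integral_norm _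
      _ = ∫ t, ‖F t - g t‖ := by simp_rw [norm_sub_rev]
      _ ≤ ε/4 := hgL1
  have h2 := hN n hn
  have htri := dist_triangle4 (∫ t, F t * h x n t) (∫ t, g t * h x n t)
    (x * ∫ t, g t) (x * ∫ t, F t)
  linarith

end FractAux

open FractAux in
/-- If `W` has an absolutely continuous distribution, then the fractional part `{nW}`
converges in distribution to `Uniform(0,1)` as `n → ∞`; equivalently, its cdf converges
pointwise to the (everywhere continuous) cdf `x ↦ max 0 (min x 1)` of `Uniform(0,1)`. -/
theorem fract_tendsto_uniform
    {Ω : Type*} {m0 : MeasurableSpace Ω} {μ : Measure Ω} [IsProbabilityMeasure μ]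
    (W : Ω → ℝ) (hW : Measurable W) (hac : μ.map W ≪ MeasureTheory.volume) :
    ∀ x : ℝ,
      Tendsto (fun n : ℕ => (μ {ω | Int.fract ((n : ℝ) * W ω) ≤ x}).toReal)
        atTop (nhds (max 0 (min x 1))) := by
  intro x
  haveI hν : IsProbabilityMeasure (μ.map W) := Measure.isProbabilityMeasure_map hW.aemeasurable
  have hrw : ∀ n : ℕ, μ {ω | Int.fract ((n : ℝ) * W ω) ≤ x} = (μ.map W) (A x n) := by
    intro n
    rw [Measure.map_apply hW (measA x n)]
    rfl
  rcases lt_or_ge x 0 with hx | hx0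
  · have hempty : ∀ n : ℕ, {ω | Int.fract ((n : ℝ) * W ω) ≤ x} = (∅ : Set Ω) := by
      intro n
      ext ω
      simp only [Set.mem_setOf_eq, Set.mem_empty_iff_false, iff_false]
      intro hc
      exact absurd (le_trans (Int.fract_nonneg _) hc) (not_le.2 hx)
    have htarget : max 0 (min x 1) = 0 :=
      max_eq_left (le_of_lt (lt_of_le_of_lt (min_le_left x 1) hx))
    rw [htarget]
    simp only [hempty, measure_empty, ENNReal.toReal_zero]
    exact tendsto_const_nhds
  rcases le_or_gt 1 x with hx1 | hx1
  · have huniv : ∀ n : ℕ, {ω | Int.fract ((n : ℝ) * W ω) ≤ x} = (Set.univ : Set Ω) := by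
      intro n; ext ω
      simp only [Set.mem_setOf_eq, Set.mem_univ, iff_true]
      exact le_trans (Int.fract_lt_one _).le hx1
    have htarget : max 0 (min x 1) = 1 := by rw [min_eq_right hx1, max_eq_right zero_le_one]
    rw [htarget]
    simp only [huniv, measure_univ, ENNReal.toReal_one]
    exact tendsto_const_nhds
  -- main case: `0 ≤ x < 1`
  have htarget : max 0 (min x 1) = x := by rw [min_eq_left hx1.le, max_eq_right hx0]
  rw [htarget]
  set ν := μ.map W with hνdef
  have hwd : volume.withDensity (ν.rnDeriv volume) = ν :=
    Measure.withDensity_rnDeriv_eq ν volume hac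
  set f := ν.rnDeriv volume with hfdef
  have hfmeas : Measurable f := Measure.measurable_rnDeriv ν volume
  have hflt : ∀ᵐ t, f t < ⊤ := Measure.rnDeriv_lt_top ν volume
  set F : ℝ → ℝ := fun t => (f t).toReal with hFdef
  have hint_f : ∫⁻ t, f t = 1 := by
    have h1 : (volume.withDensity f) Set.univ = ∫⁻ t, f t := by
      rw [withDensity_apply f MeasurableSet.univ, setLIntegral_univ]
    rw [← h1, hwd, measure_univ]
  have hFint : Integrable F := integrable_toReal_of_lintegral_ne_top hfmeas.aemeasurable
    (by rw [hint_f]; exact ENNReal.one_ne_top)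
  have hFtot : ∫ t, F t = 1 := by
    rw [hFdef, integral_toReal hfmeas.aemeasurable hflt, hint_f, ENNReal.toReal_one]
  have happ : ∀ n : ℕ, (ν (A x n)).toReal = ∫ t, F t * h x n t := by
    intro n
    rw [← hwd, withDensity_apply f (measA x n),
      ← integral_toReal hfmeas.aemeasurable.restrict (ae_restrict_of_ae hflt),
      ← integral_indicator (measA x n)]
    congr 1
    ext t
    by_cases ht : t ∈ A x n
    · rw [Set.indicator_of_mem ht]
      show F t = F t * h x n t
      unfold h
      rw [Set.indicator_of_mem ht, mul_one]
    · rw [Set.indicator_of_notMem ht]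
      show (0:ℝ) = F t * h x n t
      unfold h
      rw [Set.indicator_of_notMem ht, mul_zero]
  have hmain := L1_tendsto hx0 hx1 hFint
  rw [hFtot, mul_one] at hmain
  refine hmain.congr fun n => ?_
  rw [hrw n, happ n]
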